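/- Coderivative of the solution mapping via the merit function. Let P and Y be normed vector spaces, X a Banach space, P×X with the max-norm ‖(p,x)‖ = max{‖p‖,‖x‖}, C ⊆ Y a closed convex cone with nonempty interior, F: P×X ⇉ Y with nonempty values, and (p̄,x̄) ∈ P×X. Suppose: (i) x̄ ∈ Solv(p̄); (ii) p ↦ ν_{F,C}(p,x̄) is upper semicontinuous at p̄; (iii) there exists δ₁ > 0 such that for every p ∈ B(p̄,δ₁) the mapping x ↦ F(p,x) is l.s.c. on X; (iv) there exists δ₂ > 0 such that, for every p ∈ B(p̄,δ₂), x ↦ F(p,x) admits an outer prederivative H_{F(p,·)}(x;·) at each x ∈ B(x̄,δ₂), and σ_H(p̄,x̄) = inf{ sup_{‖u‖=1} core(C, H_{F(p,·)}(x;u)) : (p,x) ∈ B(p̄,δ₂)×B(x̄,δ₂), F(p,x) ⊄ C } > 0. Then there exist ζ, η > 0 such that for every (p,x) ∈ [int B(p̄,ζ) × int B(x̄,η)] ∩ graph Solv and every x* ∈ X*, the Fréchet coderivative satisfies D*Solv(p,x)(x*) = {p* ∈ P* : (p*,−x*) ∈ cone ∂̂ν_{F,C}(p,x)}. -/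

import Mathlib

open Classical Metric Filter Set
open scoped ENNReal Topology Pointwise

/-- Excess of `A` over `C`: `e(A,C) = sup_{a ∈ A} dist(a,C)`. -/
noncomputable def exc {Y : Type*} [PseudoEMetricSpace Y] (A C : Set Y) : ℝ≥0∞ :=
  ⨆ y ∈ A, EMetric.infEdist y C

/-- A set-valued mapping `Φ` is l.s.c. at `x0`. -/
def SVLscAt {X Y : Type*} [PseudoMetricSpace X] [TopologicalSpace Y]
    (Φ : X → Set Y) (x0 : X) : Prop :=
  ∀ V : Set Y, IsOpen V → (Φ x0 ∩ V).Nonempty →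
    ∃ δ > (0:ℝ), ∀ x ∈ closedBall x0 δ, (Φ x ∩ V).Nonempty

/-- `H` is a (positively homogeneous) outer prederivative of `Φ` at `x0`. -/
def IsOuterPrederivAt {X Y : Type*} [NormedAddCommGroup X] [NormedSpace ℝ X]
    [NormedAddCommGroup Y] [NormedSpace ℝ Y]
    (Φ : X → Set Y) (H : X → Set Y) (x0 : X) : Prop :=
  (∀ t : ℝ, 0 < t → ∀ u : X, H (t • u) = t • H u) ∧
  ∀ ε > (0:ℝ), ∃ δ > (0:ℝ), ∀ x ∈ closedBall x0 δ,
    Φ x ⊆ Φ x0 + H (x - x0) + (ε * ‖x - x0‖) • closedBall (0:Y) 1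

/-- `core(K,S) = sup{r > 0 : S + r𝔹 ⊆ K}`. -/
noncomputable def coreSet {Y : Type*} [NormedAddCommGroup Y] [NormedSpace ℝ Y]
    (K S : Set Y) : ℝ≥0∞ :=
  ⨆ r ∈ {r : ℝ | 0 < r ∧ S + r • closedBall (0:Y) 1 ⊆ K}, ENNReal.ofReal r

/-- Fréchet normal cone to `S` at `w0`:
`{w* : limsup_{w → w0, w ∈ S} ⟨w*, w − w0⟩ / ‖w − w0‖ ≤ 0}`. -/
def FNormalCone {E : Type*} [NormedAddCommGroup E] [NormedSpace ℝ E]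
    (S : Set E) (w0 : E) : Set (E →L[ℝ] ℝ) :=
  {ws | ∀ ε > (0:ℝ), ∀ᶠ w in nhdsWithin w0 S, ws (w - w0) ≤ ε * ‖w - w0‖}

/-- Fréchet subdifferential of an extended-real-valued function `φ : E → [0,∞]` at `w0`:
`{w* : liminf_{w → w0} (φ w − φ w0 − ⟨w*, w − w0⟩)/‖w − w0‖ ≥ 0}`. -/
def FSubdiff {E : Type*} [NormedAddCommGroup E] [NormedSpace ℝ E]
    (φ : E → ℝ≥0∞) (w0 : E) : Set (E →L[ℝ] ℝ) :=
  {ws | ∀ ε > (0:ℝ), ∀ᶠ w in nhds w0,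
    ((φ w0 : EReal) + ((ws (w - w0) - ε * ‖w - w0‖ : ℝ) : EReal)) ≤ (φ w : EReal)}


lemma exc_eq_zero {Y : Type*} [PseudoEMetricSpace Y] {A C : Set Y} (h : A ⊆ C) :
    exc A C = 0 := by
  rw [exc, ← le_zero_iff]
  refine iSup₂_le fun y hy => ?_
  rw [le_zero_iff]
  exact EMetric.infEdist_zero_of_mem (h hy)

lemma subset_of_exc_eq_zero {Y : Type*} [EMetricSpace Y] {A C : Set Y} (hC : IsClosed C)
    (h : exc A C = 0) : A ⊆ C := by
  intro a ha
  have : EMetric.infEdist a C = 0 := le_antisymm (le_trans (le_iSup₂ (f := fun y (_ : y ∈ A) => EMetric.infEdist y C) a ha) h.le) zero_le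
  rw [← hC.closure_eq]
  exact EMetric.mem_closure_iff_infEdist_zero.2 this

lemma merit_lsc {X Y : Type*} [PseudoMetricSpace X] [PseudoEMetricSpace Y]
    (Φ : X → Set Y) (C : Set Y) (h : ∀ x, SVLscAt Φ x) :
    LowerSemicontinuous (fun x => exc (Φ x) C) := by
  intro x₀ c hc
  simp only [exc, lt_iSup_iff] at hc
  obtain ⟨y₀, hy₀, hc⟩ := hc
  obtain ⟨c', hcc', hc'⟩ := exists_between hc
  set V : Set Y := {y | c' < EMetric.infEdist y C} with hV
  have hVopen : IsOpen V := isOpen_lt continuous_const EMetric.continuous_infEdist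
  obtain ⟨δ, hδ, hball⟩ := h x₀ V hVopen ⟨y₀, hy₀, hc'⟩
  filter_upwards [Metric.closedBall_mem_nhds x₀ hδ] with x hx
  obtain ⟨y, hy, hyV⟩ := hball x hx
  calc c < c' := hcc'
    _ ≤ EMetric.infEdist y C := hyV.le
    _ ≤ exc (Φ x) C := le_iSup₂ (f := fun y (_ : y ∈ Φ x) => EMetric.infEdist y C) y hy

theorem ekeland_ennreal {α : Type*} [EMetricSpace α] [CompleteSpace α]
    (f : α → ℝ≥0∞) (hf : LowerSemicontinuous f) (x₀ : α) (hx₀ : f x₀ ≠ ⊤)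
    (lam : ℝ≥0∞) (hlam0 : lam ≠ 0) (hlamt : lam ≠ ⊤) :
    ∃ v, f v ≤ f x₀ ∧ lam * edist x₀ v ≤ f x₀ ∧ ∀ z, f v ≤ f z + lam * edist z v := by
  set S : α → Set α := fun y => {z | f z + lam * edist z y ≤ f y} with hS
  have hSmem : ∀ y, y ∈ S y := by
    intro y; simp [hS]
  have hS_f : ∀ {y z}, z ∈ S y → f z ≤ f y := by
    intro y z hz; exact le_trans le_self_add hz
  have hS_trans : ∀ {w y z}, z ∈ S y → y ∈ S w → z ∈ S w := by
    intro w y z hz hy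
    have : f z + lam * edist z w ≤ (f z + lam * edist z y) + lam * edist y w := by
      rw [add_assoc, ← mul_add]
      exact add_le_add_right (mul_le_mul_right (edist_triangle _ _ _) lam) _
    exact le_trans (le_trans this (add_le_add_left hz _)) hy
  have hS_closed : ∀ y, IsClosed (S y) := by
    intro y
    have hlsc : LowerSemicontinuous (fun z => f z + lam * edist z y) := by
      apply hf.add
      have : Continuous (fun z : α => lam * edist z y) :=
        (ENNReal.continuous_const_mul hlamt).comp (continuous_id.edist continuous_const)
      exact this.lowerSemicontinuous
    exact hlsc.isClosed_preimage (f y)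
  -- choice of next point
  have key : ∀ (n : ℕ) (y : α), ∃ z, z ∈ S y ∧ f z ≤ (⨅ w ∈ S y, f w) + (1/2)^n := by
    intro n y
    by_cases hm : (⨅ w ∈ S y, f w) = ⊤
    · exact ⟨y, hSmem y, by simp [hm]⟩
    · have hlt : (⨅ w ∈ S y, f w) < (⨅ w ∈ S y, f w) + (1/2)^n :=
        ENNReal.lt_add_right hm (pow_ne_zero _ (by norm_num))
      obtain ⟨z, hz2⟩ := iInf_lt_iff.1 hlt
      obtain ⟨hz, hz2⟩ := iInf_lt_iff.1 hz2
      exact ⟨z, hz, hz2.le⟩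
  choose g hg1 hg2 using key
  set x : ℕ → α := fun n => Nat.rec x₀ (fun k xk => g k xk) n with hxdef
  have hx0 : x 0 = x₀ := rfl
  have h1 : ∀ n, x (n+1) ∈ S (x n) := fun n => hg1 n (x n)
  have h2 : ∀ n, f (x (n+1)) ≤ (⨅ w ∈ S (x n), f w) + (1/2)^n := fun n => hg2 n (x n)
  have hmono : ∀ n k, x (n + k) ∈ S (x n) := by
    intro n k; induction k with
    | zero => exact hSmem _
    | succ k ih => exact hS_trans (h1 (n+k)) ih
  have hmono' : ∀ {n k}, n ≤ k → x k ∈ S (x n) := by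
    intro n k hnk; obtain ⟨m, rfl⟩ := Nat.exists_eq_add_of_le hnk; exact hmono n m
  have hfx : ∀ n, f (x n) ≤ f x₀ := fun n => hx0 ▸ hS_f (hmono' (Nat.zero_le n))
  -- diameter bound
  have hdiam : ∀ n, ∀ z ∈ S (x (n+1)), lam * edist z (x (n+1)) ≤ (1/2)^n := by
    intro n z hz
    have hzS : z ∈ S (x n) := hS_trans hz (h1 n)
    have hinf : (⨅ w ∈ S (x n), f w) ≤ f z := biInf_le f hzS
    have hfz : f z ≠ ⊤ :=
      (lt_of_le_of_lt (le_trans (hS_f hzS) (hfx n)) (lt_top_iff_ne_top.2 hx₀)).ne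
    have : f z + lam * edist z (x (n+1)) ≤ f z + (1/2)^n :=
      le_trans hz (le_trans (h2 n) (add_le_add_left hinf _))
    exact (ENNReal.add_le_add_iff_left hfz).1 this
  have hdist : ∀ n, ∀ z ∈ S (x (n+1)), edist z (x (n+1)) ≤ (1/2)^n / lam := by
    intro n z hz
    rw [ENNReal.le_div_iff_mul_le (Or.inl hlam0) (Or.inl hlamt), mul_comm]
    exact hdiam n z hz
  -- Cauchy
  have hcauchy : CauchySeq x := by
    rw [EMetric.cauchySeq_iff]
    intro ε hε
    have htend : Tendsto (fun n : ℕ => ((1:ℝ≥0∞)/2)^n / lam) atTop (𝓝 0) := by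
      have h0 : Tendsto (fun n : ℕ => ((1:ℝ≥0∞)/2)^n) atTop (𝓝 0) :=
        ENNReal.tendsto_pow_atTop_nhds_zero_of_lt_one (by norm_num)
      have := ENNReal.Tendsto.div_const h0 (Or.inr hlam0)
      simpa using this
    have hpos : (0:ℝ≥0∞) < ε / 2 := ENNReal.div_pos hε.ne' (by norm_num)
    obtain ⟨N, hN⟩ := (htend.eventually_lt_const hpos).exists
    refine ⟨N + 1, fun k hk l hl => ?_⟩
    have hk' : edist (x k) (x (N+1)) ≤ (1/2)^N / lam := hdist N _ (hmono' hk)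
    have hl' : edist (x (N+1)) (x l) ≤ (1/2)^N / lam := by
      rw [edist_comm]; exact hdist N _ (hmono' hl)
    calc edist (x k) (x l) ≤ edist (x k) (x (N+1)) + edist (x (N+1)) (x l) :=
          edist_triangle _ _ _
      _ ≤ (1/2)^N / lam + (1/2)^N / lam := add_le_add hk' hl'
      _ < ε / 2 + ε / 2 := ENNReal.add_lt_add hN hN
      _ = ε := ENNReal.add_halves ε
  obtain ⟨v, hv⟩ := cauchySeq_tendsto_of_complete hcauchy
  have hvS : ∀ n, v ∈ S (x n) := by
    intro n
    apply (hS_closed (x n)).mem_of_tendsto hv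
    filter_upwards [eventually_ge_atTop n] with k hk
    exact hmono' hk
  refine ⟨v, hS_f (hvS 0), ?_, ?_⟩
  · have h := hvS 0
    calc lam * edist x₀ v ≤ f v + lam * edist v x₀ := by
          rw [edist_comm]; exact le_add_self
      _ ≤ f x₀ := h
  · intro z
    by_contra hcon
    push_neg at hcon
    have hzv : z ∈ S v := hcon.le
    have hfzt : f z ≠ ⊤ := by
      intro h
      rw [h] at hcon
      simp at hcon
    have hkey : ∀ n : ℕ, f v ≤ f z + (1/2)^n := by
      intro n
      have hzn : z ∈ S (x n) := hS_trans hzv (hvS n)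
      have hinf : (⨅ w ∈ S (x n), f w) ≤ f z := biInf_le f hzn
      exact le_trans (hS_f (hvS (n+1))) (le_trans (h2 n) (add_le_add_left hinf _))
    have hle : f v ≤ f z := by
      refine ENNReal.le_of_forall_pos_le_add fun ε hε _ => ?_
      have htend : Tendsto (fun n : ℕ => ((1:ℝ≥0∞)/2)^n) atTop (𝓝 0) :=
        ENNReal.tendsto_pow_atTop_nhds_zero_of_lt_one (by norm_num)
      obtain ⟨n, hn⟩ := (htend.eventually_lt_const (by exact_mod_cast hε : (0:ℝ≥0∞) < ε)).exists
      exact le_trans (hkey n) (add_le_add_right hn.le _)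
    exact absurd (lt_of_lt_of_le hcon hle) (by simp)

lemma convex_cone_add {Y : Type*} [NormedAddCommGroup Y] [NormedSpace ℝ Y]
    {C : Set Y} (hCconv : Convex ℝ C) (hCcone : ∀ t : ℝ, 0 < t → ∀ y ∈ C, t • y ∈ C)
    {c₁ c₂ : Y} (h₁ : c₁ ∈ C) (h₂ : c₂ ∈ C) : c₁ + c₂ ∈ C := by
  have hmid : (1/2:ℝ) • c₁ + (1/2:ℝ) • c₂ ∈ C :=
    hCconv h₁ h₂ (by norm_num) (by norm_num) (by norm_num)
  have := hCcone 2 (by norm_num) _ hmid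
  rwa [smul_add, smul_smul, smul_smul, show (2:ℝ) * (1/2) = 1 by norm_num, one_smul,
    one_smul] at this

lemma descent_lemma {X Y : Type*} [NormedAddCommGroup X] [NormedSpace ℝ X]
    [NormedAddCommGroup Y] [NormedSpace ℝ Y]
    {C : Set Y} (hCconv : Convex ℝ C) (hCcone : ∀ t : ℝ, 0 < t → ∀ y ∈ C, t • y ∈ C)
    {Φ : X → Set Y} {xh u : X} (hu : ‖u‖ = 1)
    {H : X → Set Y} (hpre : IsOuterPrederivAt Φ H xh)
    {r : ℝ} (hr : 0 < r) (hrC : H u + r • closedBall (0:Y) 1 ⊆ C)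
    {M : ℝ≥0∞} (hM : exc (Φ xh) C ≤ M) (hMt : M ≠ ⊤)
    {ε : ℝ} (hε : 0 < ε) :
    ∃ δ > (0:ℝ), ∀ t : ℝ, 0 < t → t ≤ δ →
      exc (Φ (xh + t • u)) C ≤ (M - ENNReal.ofReal (t*r)) + ENNReal.ofReal (ε*t) := by
  obtain ⟨hhomog, hεδ⟩ := hpre
  obtain ⟨δ, hδ, hδprop⟩ := hεδ ε hε
  refine ⟨δ, hδ, fun t ht htδ => ?_⟩
  have hnorm : ‖(xh + t • u) - xh‖ = t := by
    rw [add_sub_cancel_left, norm_smul, hu, Real.norm_eq_abs, abs_of_pos ht, mul_one]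
  have hxmem : xh + t • u ∈ closedBall xh δ := by
    rw [mem_closedBall, dist_eq_norm, hnorm]; exact htδ
  have hsub := hδprop (xh + t • u) hxmem
  rw [add_sub_cancel_left, hhomog t ht u, norm_smul, hu, Real.norm_eq_abs,
    abs_of_pos ht, mul_one] at hsub
  -- bound each element
  refine iSup₂_le fun y hy => ?_
  obtain ⟨ab, hab, w, hw, rfl⟩ := hsub hy
  obtain ⟨a, ha, h', hh', rfl⟩ := hab
  obtain ⟨h, hh, rfl⟩ := hh'
  obtain ⟨b, hb, rfl⟩ := hw
  rw [mem_closedBall_zero_iff] at hb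
  set w : Y := (ε * t) • b with hwdef
  have hwnorm : ‖w‖ ≤ ε * t := by
    rw [hwdef, norm_smul, Real.norm_eq_abs, abs_of_nonneg (by positivity : (0:ℝ) ≤ ε*t)]
    exact mul_le_of_le_one_right (by positivity) hb
  have haM : EMetric.infEdist a C ≤ M :=
    le_trans (le_iSup₂ (f := fun y (_ : y ∈ Φ xh) => EMetric.infEdist y C) a ha) hM
  have hhC : h ∈ C := by
    apply hrC
    have : h + r • (0:Y) ∈ H u + r • closedBall (0:Y) 1 :=
      Set.add_mem_add hh (Set.smul_mem_smul_set (mem_closedBall_zero_iff.2 (by simp)))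
    simpa using this
  -- main estimate
  refine ENNReal.le_of_forall_pos_le_add fun lam hlam hfin => ?_
  have hMlt : EMetric.infEdist a C < M + lam := by
    refine lt_of_le_of_lt haM (ENNReal.lt_add_right hMt ?_)
    exact_mod_cast hlam.ne'
  obtain ⟨c, hc, hac⟩ := EMetric.infEdist_lt_iff.1 hMlt
  have hacfin : edist a c ≠ ⊤ := by
    intro hcon
    rw [hcon] at hac
    exact absurd hac (by simp [ENNReal.add_lt_top, lt_top_iff_ne_top, hMt])
  have hdac : dist a c ≤ M.toReal + (lam:ℝ) := by
    have h1 : (edist a c).toReal ≤ (M + lam).toReal :=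
      ENNReal.toReal_mono (by simp [ENNReal.add_eq_top, hMt]) hac.le
    rwa [edist_dist, ENNReal.toReal_ofReal dist_nonneg,
      ENNReal.toReal_add hMt ENNReal.coe_ne_top, ENNReal.coe_toReal] at h1
  rw [dist_eq_norm] at hdac
  by_cases hceq : a = c
  · -- a = c : excess already ≤ λ-ish, just use c + t•h
    have hc' : c + t • h ∈ C := convex_cone_add hCconv hCcone hc (hCcone t ht h hhC)
    calc EMetric.infEdist (a + t • h + w) C ≤ edist (a + t • h + w) (c + t • h) :=
          EMetric.infEdist_le_edist_of_mem hc'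
      _ = ENNReal.ofReal (dist (a + t • h + w) (c + t • h)) := edist_dist _ _
      _ ≤ ENNReal.ofReal (ε * t) := by
          apply ENNReal.ofReal_le_ofReal
          rw [dist_eq_norm, hceq]
          simpa using hwnorm
      _ ≤ (M - ENNReal.ofReal (t*r)) + ENNReal.ofReal (ε*t) := le_add_self
      _ ≤ (M - ENNReal.ofReal (t*r)) + ENNReal.ofReal (ε*t) + lam := le_self_add
  · -- a ≠ c
    set da : ℝ := ‖a - c‖ with hdadef
    have hda : 0 < da := norm_pos_iff.2 (sub_ne_zero.2 hceq)
    set v : Y := da⁻¹ • (a - c) with hvdef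
    have hvnorm : ‖v‖ = 1 := by
      rw [hvdef, norm_smul, norm_inv, Real.norm_eq_abs, abs_of_pos hda, ← hdadef,
        inv_mul_cancel₀ hda.ne']
    have hdav : da • v = a - c := by
      rw [hvdef, smul_smul, mul_inv_cancel₀ hda.ne', one_smul]
    set s' : ℝ := min (t*r) da with hs'def
    have hs'0 : 0 ≤ s' := le_min (by positivity) hda.le
    have hs'da : s' ≤ da := min_le_right _ _
    have hs'tr : s' ≤ t*r := min_le_left _ _
    have hmemC : h + (s'/t) • v ∈ C := by
      apply hrC
      refine Set.add_mem_add hh ?_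
      have hsv : r • ((s'/(t*r)) • v) = (s'/t) • v := by
        rw [smul_smul]
        congr 1
        field_simp
      refine ⟨(s'/(t*r)) • v, mem_closedBall_zero_iff.2 ?_, hsv⟩
      rw [norm_smul, hvnorm, mul_one, Real.norm_eq_abs, abs_of_nonneg (by positivity)]
      exact div_le_one_of_le₀ hs'tr (by positivity)
    have hc' : c + t • (h + (s'/t) • v) ∈ C :=
      convex_cone_add hCconv hCcone hc (hCcone t ht _ hmemC)
    have hexpand : c + t • (h + (s'/t) • v) = c + t • h + s' • v := by
      rw [smul_add, smul_smul, mul_div_cancel₀ _ ht.ne', add_assoc]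
    rw [hexpand] at hc'
    have hdistbound : dist (a + t • h + w) (c + t • h + s' • v) ≤ (da - s') + ε * t := by
      have : a + t • h + w - (c + t • h + s' • v) = ((a - c) - s' • v) + w := by abel
      rw [dist_eq_norm, this]
      have h2 : ‖(a - c) - s' • v‖ = da - s' := by
        rw [← hdav, ← sub_smul, norm_smul, hvnorm, mul_one, Real.norm_eq_abs,
          abs_of_nonneg (by linarith)]
      calc ‖((a - c) - s' • v) + w‖ ≤ ‖(a - c) - s' • v‖ + ‖w‖ := norm_add_le _ _
        _ ≤ (da - s') + ε * t := by rw [h2]; linarith [hwnorm]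
    have hreal : (da - s') + ε * t ≤ (max (M.toReal - t*r) 0 + (lam:ℝ)) + ε * t := by
      have : da - s' ≤ max (M.toReal - t*r) 0 + (lam:ℝ) := by
        rcases le_total (t*r) da with h1 | h1
        · rw [hs'def, min_eq_left h1]
          have := le_max_left (M.toReal - t*r) 0
          linarith
        · rw [hs'def, min_eq_right h1]
          have h3 := le_max_right (M.toReal - t*r) 0
          have h4 : (0:ℝ) ≤ (lam:ℝ) := lam.coe_nonneg
          linarith
      linarith
    have hof : ENNReal.ofReal (max (M.toReal - t*r) 0) = M - ENNReal.ofReal (t*r) := by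
      have hmax : ENNReal.ofReal (max (M.toReal - t*r) 0) = ENNReal.ofReal (M.toReal - t*r) := by
        rcases le_total (M.toReal - t*r) 0 with h2 | h2
        · rw [max_eq_right h2, ENNReal.ofReal_zero]
          exact (ENNReal.ofReal_eq_zero.2 h2).symm
        · rw [max_eq_left h2]
      rw [hmax, ENNReal.ofReal_sub _ (by positivity), ENNReal.ofReal_toReal hMt]
    calc EMetric.infEdist (a + t • h + w) C ≤ edist (a + t • h + w) (c + t • h + s' • v) :=
          EMetric.infEdist_le_edist_of_mem hc'
      _ = ENNReal.ofReal (dist (a + t • h + w) (c + t • h + s' • v)) := edist_dist _ _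
      _ ≤ ENNReal.ofReal ((max (M.toReal - t*r) 0 + (lam:ℝ)) + ε * t) :=
          ENNReal.ofReal_le_ofReal (le_trans hdistbound hreal)
      _ ≤ ENNReal.ofReal (max (M.toReal - t*r) 0 + (lam:ℝ)) + ENNReal.ofReal (ε * t) :=
          ENNReal.ofReal_add_le
      _ ≤ (ENNReal.ofReal (max (M.toReal - t*r) 0) + ENNReal.ofReal (lam:ℝ)) +
            ENNReal.ofReal (ε * t) := add_le_add_left ENNReal.ofReal_add_le _
      _ = ((M - ENNReal.ofReal (t*r)) + lam) + ENNReal.ofReal (ε * t) := by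
          rw [hof, ENNReal.ofReal_coe_nnreal]
      _ = (M - ENNReal.ofReal (t*r)) + ENNReal.ofReal (ε*t) + lam := by
          rw [add_right_comm]

lemma error_bound {X Y : Type*} [NormedAddCommGroup X] [NormedSpace ℝ X] [CompleteSpace X]
    [NormedAddCommGroup Y] [NormedSpace ℝ Y]
    {C : Set Y} (hCclosed : IsClosed C) (hCconv : Convex ℝ C)
    (hCcone : ∀ t : ℝ, 0 < t → ∀ y ∈ C, t • y ∈ C)
    {Φ : X → Set Y} (hlsc : ∀ x, SVLscAt Φ x)
    (xbar : X) (δ₂ : ℝ) (hδ₂ : 0 < δ₂) {HH : X → X → Set Y}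
    (hH : ∀ x ∈ closedBall xbar δ₂, IsOuterPrederivAt Φ (HH x) x)
    {s : ℝ} (hs : 0 < s)
    (hdir : ∀ x ∈ closedBall xbar δ₂, ¬ Φ x ⊆ C →
      ∃ u : X, ‖u‖ = 1 ∧ ∃ r : ℝ, s/2 < r ∧ HH x u + r • closedBall (0:Y) 1 ⊆ C)
    (x' : X) (hx' : x' ∈ closedBall xbar (δ₂/2))
    (hsmall : exc (Φ x') C ≤ ENNReal.ofReal (s/8 * (δ₂/2))) :
    ∃ xh, Φ xh ⊆ C ∧ ENNReal.ofReal (s/8) * edist x' xh ≤ exc (Φ x') C := by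
  set f : X → ℝ≥0∞ := fun z => exc (Φ z) C with hfdef
  have hflsc : LowerSemicontinuous f := merit_lsc Φ C hlsc
  have hfin : f x' ≠ ⊤ := (lt_of_le_of_lt hsmall ENNReal.ofReal_lt_top).ne
  have hs8 : (0:ℝ) < s/8 := by linarith
  obtain ⟨v, hv1, hv2, hv3⟩ := ekeland_ennreal f hflsc x' hfin (ENNReal.ofReal (s/8))
    (by simp [ENNReal.ofReal_eq_zero]; linarith) ENNReal.ofReal_ne_top
  refine ⟨v, ?_, hv2⟩
  by_contra hcon
  -- v is in the ball of radius δ₂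
  have hdxv : dist x' v ≤ δ₂/2 := by
    have h1 : ENNReal.ofReal (s/8) * edist x' v ≤ ENNReal.ofReal (s/8) * ENNReal.ofReal (δ₂/2) := by
      rw [← ENNReal.ofReal_mul hs8.le]
      exact le_trans hv2 hsmall
    have h2 : edist x' v ≤ ENNReal.ofReal (δ₂/2) :=
      ENNReal.le_of_forall_pos_le_add fun lam hlam hfin2 => by
        have := (ENNReal.mul_le_mul_iff_right (by simp [ENNReal.ofReal_eq_zero]; linarith)
          ENNReal.ofReal_ne_top).1 h1
        exact le_trans this le_self_add
    rwa [edist_dist, ENNReal.ofReal_le_ofReal_iff (by linarith)] at h2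
  have hvball : v ∈ closedBall xbar δ₂ := by
    rw [mem_closedBall] at hx' ⊢
    calc dist v xbar ≤ dist v x' + dist x' xbar := dist_triangle _ _ _
      _ ≤ δ₂/2 + δ₂/2 := add_le_add (dist_comm x' v ▸ hdxv) hx'
      _ = δ₂ := by ring
  obtain ⟨u, hu, r, hrs, hrC⟩ := hdir v hvball hcon
  have hr : 0 < r := by linarith
  have hfvfin : f v ≠ ⊤ := (lt_of_le_of_lt hv1 (lt_top_iff_ne_top.2 hfin)).ne
  obtain ⟨δ, hδ, hdec⟩ := descent_lemma hCconv hCcone hu (hH v hvball) hr hrC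
    (le_refl (f v)) hfvfin hs8
  -- f v > 0
  have hfvpos : 0 < f v := by
    obtain ⟨a, ha, haC⟩ := Set.not_subset.1 hcon
    have h1 : 0 < EMetric.infEdist a C := by
      exact EMetric.infEdist_pos_iff_notMem_closure.2 (by rw [hCclosed.closure_eq]; exact haC)
    exact lt_of_lt_of_le h1
      (le_iSup₂ (f := fun y (_ : y ∈ Φ v) => EMetric.infEdist y C) a ha)
  set t : ℝ := min δ ((f v).toReal / r) with htdef
  have ht : 0 < t := lt_min hδ (div_pos (ENNReal.toReal_pos hfvpos.ne' hfvfin) hr)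
  have htr : ENNReal.ofReal (t*r) ≤ f v := by
    have h1 : t * r ≤ (f v).toReal := by
      have := min_le_right δ ((f v).toReal / r)
      calc t * r ≤ ((f v).toReal / r) * r := by nlinarith
        _ = (f v).toReal := by field_simp
    calc ENNReal.ofReal (t*r) ≤ ENNReal.ofReal ((f v).toReal) := ENNReal.ofReal_le_ofReal h1
      _ = f v := ENNReal.ofReal_toReal hfvfin
  have hstep := hdec t ht (min_le_left _ _)
  have hek := hv3 (v + t • u)
  have hedist : edist (v + t • u) v = ENNReal.ofReal t := by
    rw [edist_dist, dist_eq_norm, add_sub_cancel_left, norm_smul, hu, Real.norm_eq_abs,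
      abs_of_pos ht, mul_one]
  rw [hedist, ← ENNReal.ofReal_mul hs8.le] at hek
  have hcombined : f v ≤ (f v - ENNReal.ofReal (t*r)) + ENNReal.ofReal (t * (s/4)) := by
    calc f v ≤ f (v + t • u) + ENNReal.ofReal (s/8 * t) := hek
      _ ≤ ((f v - ENNReal.ofReal (t*r)) + ENNReal.ofReal (s/8*t)) + ENNReal.ofReal (s/8*t) :=
          add_le_add_left hstep _
      _ = (f v - ENNReal.ofReal (t*r)) + (ENNReal.ofReal (s/8*t) + ENNReal.ofReal (s/8*t)) := by
          rw [add_assoc]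
      _ = (f v - ENNReal.ofReal (t*r)) + ENNReal.ofReal (t * (s/4)) := by
          rw [← ENNReal.ofReal_add (by positivity) (by positivity)]
          ring_nf
  have hfinal : ENNReal.ofReal (t*r) ≤ ENNReal.ofReal (t * (s/4)) := by
    have h1 : f v - (f v - ENNReal.ofReal (t*r)) = ENNReal.ofReal (t*r) :=
      ENNReal.sub_sub_cancel hfvfin htr
    calc ENNReal.ofReal (t*r) = f v - (f v - ENNReal.ofReal (t*r)) := h1.symm
      _ ≤ ENNReal.ofReal (t * (s/4)) := tsub_le_iff_left.2 hcombined
  rw [ENNReal.ofReal_le_ofReal_iff (by positivity)] at hfinal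
  nlinarith

lemma ereal_coe_toReal_le {v : ℝ≥0∞} : ((v.toReal : ℝ) : EReal) ≤ (v : EReal) := by
  by_cases hv : v = ⊤
  · subst hv; simp
  · rw [← ENNReal.ofReal_toReal hv, EReal.coe_ennreal_ofReal, ENNReal.ofReal_toReal hv,
      max_eq_left ENNReal.toReal_nonneg]

lemma real_le_ereal_of_ofReal_le {a : ℝ} {v : ℝ≥0∞} (h : ENNReal.ofReal a ≤ v) :
    (a : EReal) ≤ (v : EReal) := by
  calc (a : EReal) ≤ ((max a 0 : ℝ) : EReal) := EReal.coe_le_coe_iff.2 (le_max_left _ _)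
    _ = (ENNReal.ofReal a : EReal) := (EReal.coe_ennreal_ofReal).symm
    _ ≤ (v : EReal) := EReal.coe_ennreal_le_coe_ennreal_iff.2 h

set_option maxHeartbeats 1000000 in
/-- **Coderivative of the solution mapping via the merit function.**
`P × X` carries the max-norm (the product norm); the Fréchet coderivative of
`Solv` at `(p,x)` applied to `x*` is `{p* : (p*,−x*) ∈ N̂(graph Solv,(p,x))}`, and it
coincides with `{p* : (p*,−x*) ∈ cone ∂̂ν_{F,C}(p,x)}`. -/
theorem coderivative_of_Solv_via_merit_function
    {P X Y : Type*} [NormedAddCommGroup P] [NormedSpace ℝ P]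
    [NormedAddCommGroup X] [NormedSpace ℝ X] [CompleteSpace X]
    [NormedAddCommGroup Y] [NormedSpace ℝ Y]
    (C : Set Y) (hCclosed : IsClosed C) (hCconv : Convex ℝ C)
    (hCcone : ∀ t : ℝ, 0 < t → ∀ y ∈ C, t • y ∈ C) (hCint : (interior C).Nonempty)
    (F : P → X → Set Y) (hFne : ∀ p x, (F p x).Nonempty)
    (pbar : P) (xbar : X)
    (hsol : F pbar xbar ⊆ C)
    (husc : UpperSemicontinuousAt (fun p => exc (F p xbar) C) pbar)
    (hlsc : ∃ δ₁ > (0:ℝ), ∀ p ∈ closedBall pbar δ₁, ∀ x : X, SVLscAt (F p) x)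
    (δ₂ : ℝ) (hδ₂ : 0 < δ₂) (H : P → X → X → Set Y)
    (hH : ∀ p ∈ closedBall pbar δ₂, ∀ x ∈ closedBall xbar δ₂,
      IsOuterPrederivAt (F p) (H p x) x)
    (σH : ℝ≥0∞)
    (hσHdef : σH = ⨅ q : {q : P × X // q.1 ∈ closedBall pbar δ₂ ∧ q.2 ∈ closedBall xbar δ₂ ∧
        ¬ F q.1 q.2 ⊆ C}, ⨆ u ∈ sphere (0:X) 1, coreSet C (H q.val.1 q.val.2 u))
    (hσHpos : 0 < σH) :
    ∃ ζ > (0:ℝ), ∃ η > (0:ℝ),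
      ∀ p ∈ Metric.ball pbar ζ, ∀ x ∈ Metric.ball xbar η, F p x ⊆ C →
        ∀ xs : X →L[ℝ] ℝ, ∀ ps : P →L[ℝ] ℝ,
          (ps.coprod (-xs) ∈ FNormalCone {q : P × X | F q.1 q.2 ⊆ C} (p, x) ↔
            ∃ κ : ℝ, 0 < κ ∧ ∃ ws ∈ FSubdiff (fun q : P × X => exc (F q.1 q.2) C) (p, x),
              ps.coprod (-xs) = κ • ws) := by
  classical
  obtain ⟨δ₁, hδ₁, hlscF⟩ := hlsc
  have hσ₀pos : 0 < min σH 1 := lt_min hσHpos zero_lt_one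
  have hσ₀top : min σH 1 ≠ ⊤ := by
    intro h
    have := min_le_right σH 1
    rw [h] at this
    exact absurd this (by simp)
  set s : ℝ := (min σH 1).toReal with hsdef
  have hs : 0 < s := ENNReal.toReal_pos hσ₀pos.ne' hσ₀top
  have hs8 : (0:ℝ) < s/8 := by linarith
  -- direction selection
  have hdir : ∀ p ∈ closedBall pbar δ₂, ∀ x ∈ closedBall xbar δ₂, ¬ F p x ⊆ C →
      ∃ u : X, ‖u‖ = 1 ∧ ∃ r : ℝ, s/2 < r ∧ H p x u + r • closedBall (0:Y) 1 ⊆ C := by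
    intro p hp x hx hns
    have h1 : σH ≤ ⨆ u ∈ sphere (0:X) 1, coreSet C (H p x u) := by
      rw [hσHdef]
      exact iInf_le (fun q : {q : P × X // q.1 ∈ closedBall pbar δ₂ ∧
          q.2 ∈ closedBall xbar δ₂ ∧ ¬ F q.1 q.2 ⊆ C} =>
          ⨆ u ∈ sphere (0:X) 1, coreSet C (H q.val.1 q.val.2 u)) ⟨(p, x), hp, hx, hns⟩
    have h2 : ENNReal.ofReal (s/2) < σH := by
      have h3 : ENNReal.ofReal (s/2) < min σH 1 := by
        rw [← ENNReal.ofReal_toReal hσ₀top, ← hsdef]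
        exact (ENNReal.ofReal_lt_ofReal_iff hs).2 (by linarith)
      exact lt_of_lt_of_le h3 (min_le_left _ _)
    have h4 := lt_of_lt_of_le h2 h1
    simp only [lt_iSup_iff] at h4
    obtain ⟨u, hu, h4⟩ := h4
    simp only [coreSet, lt_iSup_iff] at h4
    obtain ⟨r, ⟨hr0, hrsub⟩, h5⟩ := h4
    exact ⟨u, mem_sphere_zero_iff_norm.1 hu, r, (ENNReal.ofReal_lt_ofReal_iff hr0).1 h5, hrsub⟩
  refine ⟨min δ₁ δ₂, lt_min hδ₁ hδ₂, δ₂/4, by linarith, ?_⟩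
  intro p hp x hx hsolpx xs ps
  set q0 : P × X := (p, x) with hq0
  set W := ps.coprod (-xs) with hWdef
  have hν0 : exc (F q0.1 q0.2) C = 0 := exc_eq_zero hsolpx
  have hpδ₁ : p ∈ closedBall pbar δ₁ :=
    mem_closedBall.2 (le_trans (mem_ball.1 hp).le (min_le_left _ _))
  have hpδ₂ : p ∈ closedBall pbar δ₂ :=
    mem_closedBall.2 (le_trans (mem_ball.1 hp).le (min_le_right _ _))
  constructor
  · intro hN
    set M : ℝ := ‖W‖ with hMdef
    have hM0 : 0 ≤ M := norm_nonneg _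
    set κ : ℝ := 1 + M / (s/8) with hκdef
    have hMs : 0 ≤ M / (s/8) := div_nonneg hM0 hs8.le
    have hκ1 : 1 ≤ κ := by rw [hκdef]; linarith
    have hκ : 0 < κ := by linarith
    set ws : (P × X) →L[ℝ] ℝ := κ⁻¹ • W with hwsdef
    refine ⟨κ, hκ, ws, ?_, (smul_inv_smul₀ hκ.ne' W).symm⟩
    intro ε hε
    have hNe := hN ε hε
    rw [eventually_nhdsWithin_iff] at hNe
    obtain ⟨δ₀, hδ₀pos, hδ₀⟩ := Metric.eventually_nhds_iff.1 hNe
    set B : ℝ := ‖ws‖ with hBdef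
    have hB0 : 0 ≤ B := norm_nonneg _
    have hBM : B ≤ M := by
      rw [hBdef, hwsdef, norm_smul κ⁻¹ W, Real.norm_eq_abs, abs_of_pos (inv_pos.2 hκ), ← hMdef]
      calc κ⁻¹ * M ≤ 1 * M := mul_le_mul_of_nonneg_right (inv_le_one_of_one_le₀ hκ1) hM0
        _ = M := one_mul M
    have hpd : dist p pbar < min δ₁ δ₂ := mem_ball.1 hp
    have hxd : dist x xbar < δ₂/4 := mem_ball.1 hx
    set ρ : ℝ := min (min (min δ₁ δ₂ - dist p pbar) (δ₂/4 - dist x xbar))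
        (min ((s/8) * (δ₂/2) / (B+1)) (δ₀/κ)) with hρdef
    have hρpos : 0 < ρ :=
      lt_min (lt_min (by linarith only [hpd]) (by linarith only [hxd]))
        (lt_min (div_pos (mul_pos hs8 (by linarith only [hδ₂])) (by linarith only [hB0]))
          (div_pos hδ₀pos hκ))
    have hρ1 : ρ ≤ min δ₁ δ₂ - dist p pbar := le_trans (min_le_left _ _) (min_le_left _ _)
    have hρ2 : ρ ≤ δ₂/4 - dist x xbar := le_trans (min_le_left _ _) (min_le_right _ _)
    have hρ3 : ρ ≤ (s/8) * (δ₂/2) / (B+1) := le_trans (min_le_right _ _) (min_le_left _ _)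
    have hρ4 : ρ ≤ δ₀/κ := le_trans (min_le_right _ _) (min_le_right _ _)
    filter_upwards [Metric.ball_mem_nhds q0 hρpos] with w hw
    rw [show ((fun q : P × X => exc (F q.1 q.2) C) q0 : EReal)
        = ((0:ℝ≥0∞) : EReal) from by rw [show (fun q : P × X => exc (F q.1 q.2) C) q0
        = exc (F q0.1 q0.2) C from rfl, hν0],
      EReal.coe_ennreal_zero, zero_add]
    set D : ℝ := ‖w - q0‖ with hDdef
    have hD0 : 0 ≤ D := norm_nonneg _
    have hDρ : D < ρ := by rw [hDdef, ← dist_eq_norm]; exact mem_ball.1 hw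
    have hwp : dist w.1 p ≤ D := by
      rw [hDdef, ← dist_eq_norm]
      rw [Prod.dist_eq]
      exact le_max_left _ _
    have hwx : dist w.2 x ≤ D := by
      rw [hDdef, ← dist_eq_norm]
      rw [Prod.dist_eq]
      exact le_max_right _ _
    have hwsD : ws (w - q0) ≤ B * D := by
      calc ws (w - q0) ≤ ‖ws (w - q0)‖ := le_abs_self _
        _ ≤ ‖ws‖ * ‖w - q0‖ := ws.le_opNorm _
        _ = B * D := by rw [← hBdef, ← hDdef]
    by_cases hcase : exc (F w.1 w.2) C < ENNReal.ofReal (B * D)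
    · -- error-bound branch
      have hνfin : exc (F w.1 w.2) C ≠ ⊤ := (hcase.trans_le le_top).ne
      have hp'1 : w.1 ∈ closedBall pbar δ₁ := by
        rw [mem_closedBall]
        linarith only [dist_triangle w.1 p pbar, min_le_left δ₁ δ₂, hwp, hDρ, hρ1]
      have hp'2 : w.1 ∈ closedBall pbar δ₂ := by
        rw [mem_closedBall]
        linarith only [dist_triangle w.1 p pbar, min_le_right δ₁ δ₂, hwp, hDρ, hρ1]
      have hx'ball : w.2 ∈ closedBall xbar (δ₂/2) := by
        rw [mem_closedBall]
        linarith only [dist_triangle w.2 x xbar, hwx, hDρ, hρ2, hxd, hδ₂]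
      have hsmall : exc (F w.1 w.2) C ≤ ENNReal.ofReal (s/8 * (δ₂/2)) := by
        refine le_trans hcase.le (ENNReal.ofReal_le_ofReal ?_)
        have h1 : B * D ≤ (B + 1) * ρ :=
          le_trans (mul_le_mul_of_nonneg_left hDρ.le hB0)
            (mul_le_mul_of_nonneg_right (by linarith only [] : B ≤ B + 1) hρpos.le)
        have h2 : (B + 1) * ρ ≤ s/8 * (δ₂/2) := by
          have h3 := mul_le_mul_of_nonneg_left hρ3 (by linarith only [hB0] : (0:ℝ) ≤ B + 1)
          rwa [mul_div_cancel₀ _ (by linarith only [hB0] : B + (1:ℝ) ≠ 0)] at h3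
        linarith only [h1, h2]
      obtain ⟨x'', hx''C, hx''d⟩ := error_bound hCclosed hCconv hCcone (hlscF w.1 hp'1)
        xbar δ₂ hδ₂ (fun z hz => hH w.1 hp'2 z hz) hs
        (fun z hz hns => hdir w.1 hp'2 z hz hns) w.2 hx'ball hsmall
      have hdist2m : (s/8) * dist w.2 x'' ≤ (exc (F w.1 w.2) C).toReal := by
        have h1 : ENNReal.ofReal ((s/8) * dist w.2 x'') ≤ exc (F w.1 w.2) C := by
          rw [ENNReal.ofReal_mul hs8.le, ← edist_dist]
          exact hx''d
        exact (ENNReal.ofReal_le_iff_le_toReal hνfin).1 h1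
      have hT0 : 0 ≤ (exc (F w.1 w.2) C).toReal := ENNReal.toReal_nonneg
      have hνD : (exc (F w.1 w.2) C).toReal ≤ B * D := by
        have h1 := ENNReal.toReal_mono ENNReal.ofReal_ne_top hcase.le
        rwa [ENNReal.toReal_ofReal (by positivity)] at h1
      have hw'S : (w.1, x'') ∈ {q : P × X | F q.1 q.2 ⊆ C} := hx''C
      have hfield : (s/8) * κ = s/8 + M := by
        rw [hκdef]
        field_simp
      have hw'dist : dist (w.1, x'') q0 ≤ κ * D := by
        rw [Prod.dist_eq]
        apply max_le
        · calc dist w.1 p ≤ D := hwp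
            _ ≤ κ * D := le_mul_of_one_le_left hD0 hκ1
        · have h1 : dist x'' x ≤ dist x'' w.2 + dist w.2 x := dist_triangle _ _ _
          have e2 : (s/8) * dist x'' w.2 ≤ M * D := by
            rw [dist_comm]
            exact le_trans hdist2m (le_trans hνD (mul_le_mul_of_nonneg_right hBM hD0))
          have p1 : (s/8) * dist x'' x ≤ (s/8) * dist x'' w.2 + (s/8) * dist w.2 x := by
            rw [← mul_add]
            exact mul_le_mul_of_nonneg_left h1 hs8.le
          have p2 : (s/8) * dist w.2 x ≤ (s/8) * D := mul_le_mul_of_nonneg_left hwx hs8.le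
          have e4 : (s/8) * (κ * D) = M * D + (s/8) * D := by
            rw [← mul_assoc, hfield]
            ring
          have e11 : (s/8) * dist x'' x ≤ (s/8) * (κ * D) := by
            linarith only [p1, p2, e2, e4]
          exact le_of_mul_le_mul_left e11 hs8
      have hw'near : W ((w.1, x'') - q0) ≤ ε * ‖(w.1, x'') - q0‖ := by
        refine hδ₀ ?_ hw'S
        calc dist (w.1, x'') q0 ≤ κ * D := hw'dist
          _ < κ * (δ₀/κ) := by
              apply mul_lt_mul_of_pos_left (lt_of_lt_of_le hDρ hρ4) hκ
          _ = δ₀ := by rw [mul_comm, div_mul_cancel₀ _ hκ.ne']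
      have hWsplit : W (w - q0) = W ((w.1, x'') - q0) + W (w - (w.1, x'')) := by
        rw [← map_add]
        congr 1
        abel
      have hnormsnd : ‖w - (w.1, x'')‖ = dist w.2 x'' := by
        have hveq : w - (w.1, x'') = ((0:P), w.2 - x'') := by
          ext
          · simp
          · simp
        rw [hveq, Prod.norm_def, norm_zero, dist_eq_norm]
        exact max_eq_right (norm_nonneg _)
      have hWw' : W (w - (w.1, x'')) ≤ M * dist w.2 x'' := by
        calc W (w - (w.1, x'')) ≤ ‖W (w - (w.1, x''))‖ := le_abs_self _
          _ ≤ ‖W‖ * ‖w - (w.1, x'')‖ := W.le_opNorm _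
          _ = M * dist w.2 x'' := by rw [hnormsnd]
      have hεterm : W ((w.1, x'') - q0) ≤ ε * (κ * D) := by
        refine le_trans hw'near ?_
        refine mul_le_mul_of_nonneg_left ?_ hε.le
        rw [← dist_eq_norm]
        exact hw'dist
      have hWbound : W (w - q0) ≤ ε * (κ * D) + M * dist w.2 x'' := by
        rw [hWsplit]
        exact add_le_add hεterm hWw'
      have hmain : ws (w - q0) ≤ ε * D + (exc (F w.1 w.2) C).toReal := by
        have h0 : ws (w - q0) = κ⁻¹ * W (w - q0) := by
          rw [hwsdef]
          simp
        rw [h0]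
        have h5 : κ⁻¹ * W (w - q0) ≤ κ⁻¹ * (ε * (κ * D) + M * dist w.2 x'') :=
          mul_le_mul_of_nonneg_left hWbound (inv_nonneg.2 hκ.le)
        refine le_trans h5 ?_
        rw [mul_add]
        have e5 : κ⁻¹ * (ε * (κ * D)) = ε * D := by
          field_simp
        have e6 : κ⁻¹ * (M * dist w.2 x'') ≤ (exc (F w.1 w.2) C).toReal := by
          have eA : (s/8) * (M * dist w.2 x'') = M * ((s/8) * dist w.2 x'') := by ring
          have eB : M * ((s/8) * dist w.2 x'') ≤ M * (exc (F w.1 w.2) C).toReal :=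
            mul_le_mul_of_nonneg_left hdist2m hM0
          have eC : M ≤ (s/8) * κ := by
            rw [hfield]
            linarith only [hs8]
          have eD : M * (exc (F w.1 w.2) C).toReal ≤
              ((s/8) * κ) * (exc (F w.1 w.2) C).toReal :=
            mul_le_mul_of_nonneg_right eC hT0
          have eE : (s/8) * (M * dist w.2 x'') ≤ (s/8) * (κ * (exc (F w.1 w.2) C).toReal) := by
            rw [eA]
            exact le_trans eB (le_trans eD (le_of_eq (by ring)))
          have e10 : M * dist w.2 x'' ≤ κ * (exc (F w.1 w.2) C).toReal :=
            le_of_mul_le_mul_left eE hs8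
          calc κ⁻¹ * (M * dist w.2 x'') ≤ κ⁻¹ * (κ * (exc (F w.1 w.2) C).toReal) :=
                mul_le_mul_of_nonneg_left e10 (inv_nonneg.2 hκ.le)
            _ = (exc (F w.1 w.2) C).toReal := by
                rw [← mul_assoc, inv_mul_cancel₀ hκ.ne', one_mul]
        rw [e5]
        exact add_le_add_right e6 _
      calc ((ws (w - q0) - ε * ‖w - q0‖ : ℝ) : EReal)
          ≤ (((exc (F w.1 w.2) C).toReal : ℝ) : EReal) := by
            refine EReal.coe_le_coe_iff.2 ?_
            rw [← hDdef]
            linarith only [hmain]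
        _ ≤ (exc (F w.1 w.2) C : EReal) := ereal_coe_toReal_le
    · push_neg at hcase
      calc ((ws (w - q0) - ε * ‖w - q0‖ : ℝ) : EReal)
          ≤ ((B * D : ℝ) : EReal) := by
            apply EReal.coe_le_coe_iff.2
            rw [← hDdef]
            linarith only [hwsD, mul_nonneg hε.le hD0]
        _ ≤ (exc (F w.1 w.2) C : EReal) := real_le_ereal_of_ofReal_le hcase
  · rintro ⟨κ, hκ, ws, hws, hWeq⟩
    intro ε hε
    have h1 := hws (ε/κ) (by positivity)
    have h2 := h1.filter_mono
      (nhdsWithin_le_nhds : 𝓝[{q : P × X | F q.1 q.2 ⊆ C}] q0 ≤ 𝓝 q0)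
    filter_upwards [h2, self_mem_nhdsWithin] with w hw hwS
    have hz : exc (F w.1 w.2) C = 0 := exc_eq_zero hwS
    simp only [hν0, hz, EReal.coe_ennreal_zero, zero_add, EReal.coe_nonpos] at hw
    have heq : W (w - q0) = κ * ws (w - q0) := by
      rw [hWeq]
      simp [ContinuousLinearMap.smul_apply, smul_eq_mul]
    rw [heq]
    calc κ * ws (w - q0) ≤ κ * (ε/κ * ‖w - q0‖) := by
          apply mul_le_mul_of_nonneg_left _ hκ.le
          linarith
      _ = ε * ‖w - q0‖ := by field_simp
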